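/- Let p(t) be a real polynomial with p(t) = 1 - β t + (higher order terms), whose coefficient sequence has exactly d sign changes, and suppose (1-t)^d divides p(t), say p(t) = (1-t)^d q(t). Then β ≤ d. -/

import Mathlib

open scoped Classical

/-- The number of sign changes in the sequence of nonzero coefficients of a real polynomial. -/
noncomputable def signChanges (p : Polynomial ℝ) : ℕ :=
  let l := ((List.range (p.natDegree + 1)).map p.coeff).filter (fun a => a ≠ 0)
  ((l.zip l.tail).filter (fun ab => ab.1 * ab.2 < 0)).length

noncomputable def nzf (l : List ℝ) : List ℝ := l.filter (fun a => a ≠ 0)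
noncomputable def cnt (l : List ℝ) : ℕ :=
  ((l.zip l.tail).filter (fun ab => ab.1 * ab.2 < 0)).length
noncomputable def V (l : List ℝ) : ℕ := cnt (nzf l)
noncomputable def fn (l : List ℝ) : Option ℝ := (nzf l).head?
noncomputable def chg (x : ℝ) (l : List ℝ) : ℕ :=
  match fn l with
  | some b => if x * b < 0 then 1 else 0
  | none => 0

lemma cnt_nil : cnt [] = 0 := rfl
lemma cnt_single (a : ℝ) : cnt [a] = 0 := rfl
lemma cnt_cons_cons (a b : ℝ) (l : List ℝ) :
    cnt (a :: b :: l) = (if a * b < 0 then 1 else 0) + cnt (b :: l) := by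
  by_cases h : a * b < 0 <;>
    simp [cnt, List.filter_cons, h, Nat.add_comm]

lemma nzf_cons_zero (l : List ℝ) : nzf ((0:ℝ) :: l) = nzf l := by
  simp [nzf]
lemma nzf_cons_ne (x : ℝ) (hx : x ≠ 0) (l : List ℝ) : nzf (x :: l) = x :: nzf l := by
  simp [nzf, hx]

lemma V_cons_zero (l : List ℝ) : V ((0:ℝ) :: l) = V l := by simp [V, nzf_cons_zero]

lemma V_cons (x : ℝ) (hx : x ≠ 0) (l : List ℝ) : V (x :: l) = chg x l + V l := by
  simp only [V, chg, fn, nzf_cons_ne x hx]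
  cases h : (nzf l).head? with
  | none =>
      have hnil : nzf l = [] := List.head?_eq_none_iff.mp h
      simp [hnil, cnt]
  | some b =>
      obtain ⟨t, ht⟩ : ∃ t, nzf l = b :: t := by
        cases hl : nzf l with
        | nil => rw [hl] at h; simp at h
        | cons c t => rw [hl] at h; simp at h; exact ⟨t, by rw [h]⟩
      rw [ht, cnt_cons_cons]

lemma chg_le_one (x : ℝ) (l : List ℝ) : chg x l ≤ 1 := by
  cases h : fn l with
  | none => simp [chg, h]
  | some b => simp only [chg, h]; split_ifs <;> simp

lemma fn_some_ne {l : List ℝ} {z : ℝ} (h : fn l = some z) : z ≠ 0 := by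
  have hm : z ∈ nzf l := List.mem_of_mem_head? h
  simpa [nzf] using (List.of_mem_filter hm)

lemma fn_cons_zero (l : List ℝ) : fn ((0:ℝ) :: l) = fn l := by simp [fn, nzf_cons_zero]
lemma fn_cons_ne (x : ℝ) (hx : x ≠ 0) (l : List ℝ) : fn (x :: l) = some x := by
  simp [fn, nzf_cons_ne x hx]

lemma V_append_zero (l : List ℝ) : V (l ++ [(0:ℝ)]) = V l := by
  simp [V, nzf, List.filter_append]

lemma star0 (x y : ℝ) (hx : x ≠ 0) (hy : y ≠ 0) :
    (if x * (x + y) < 0 then 1 else 0) ≤ (if x * y < 0 then (1:ℕ) else 0) := by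
  rcases hx.lt_or_gt with h|h <;> rcases hy.lt_or_gt with h'|h' <;>
    split_ifs <;> first | omega | (exfalso; nlinarith)

set_option maxHeartbeats 4000000 in
lemma star (x y z : ℝ) (hx : x ≠ 0) (hy : y ≠ 0) (hz : z ≠ 0) (hx' : x + y ≠ 0) :
    (if x * (x + y) < 0 then 1 else 0) + (if (x + y) * z < 0 then 1 else 0) ≤
      (if x * y < 0 then (1:ℕ) else 0) + (if y * z < 0 then 1 else 0) := by
  rcases hx.lt_or_gt with h|h <;> rcases hy.lt_or_gt with h'|h' <;>
    rcases hz.lt_or_gt with h''|h'' <;> rcases hx'.lt_or_gt with h'''|h''' <;>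
    split_ifs <;> first | omega | (exfalso; nlinarith)

lemma V_le_cons (x : ℝ) (l : List ℝ) : V l ≤ V (x :: l) := by
  by_cases hx : x = 0
  · subst hx; rw [V_cons_zero]
  · rw [V_cons x hx]; omega

lemma V_of_all_zero {l : List ℝ} (h : ∀ w ∈ l, w = 0) : V l = 0 := by
  have : nzf l = [] := by
    simp only [nzf, List.filter_eq_nil_iff]
    intro a ha; simpa using h a ha
  simp [V, this, cnt]

lemma fn_of_all_zero {l : List ℝ} (h : ∀ w ∈ l, w = 0) : fn l = none := by
  have : nzf l = [] := by
    simp only [nzf, List.filter_eq_nil_iff]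
    intro a ha; simpa using h a ha
  simp [fn, this]

lemma chg_of_all_zero (x : ℝ) {l : List ℝ} (h : ∀ w ∈ l, w = 0) : chg x l = 0 := by
  simp [chg, fn_of_all_zero h]

lemma scanl_zero_of_all_zero : ∀ (t : List ℝ), (∀ w ∈ t, w = 0) →
    ∀ c ∈ List.scanl (·+·) (0:ℝ) t, c = 0 := by
  intro t
  induction t with
  | nil => intro _ c hc; simpa using hc
  | cons z t' ih =>
      intro h c hc
      have hz : z = 0 := h z (by simp)
      rw [List.scanl_cons] at hc
      rcases List.mem_cons.mp hc with h1 | h1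
      · exact h1
      · have : (0:ℝ) + z = 0 := by rw [hz]; ring
        rw [this] at h1
        exact ih (fun w hw => h w (by simp [hw])) c h1

lemma fn_scanl (x : ℝ) (hx : x ≠ 0) (t : List ℝ) :
    fn (List.scanl (·+·) x t) = some x := by
  cases t with
  | nil => simp [List.scanl_nil, fn_cons_ne x hx]
  | cons z t' => rw [List.scanl_cons]; exact fn_cons_ne x hx _

lemma chg_eq_of_fn (x : ℝ) {l : List ℝ} {b : ℝ} (h : fn l = some b) :
    chg x l = if x * b < 0 then 1 else 0 := by
  unfold chg; rw [h]

lemma chg_eq_of_fn_none (x : ℝ) {l : List ℝ} (h : fn l = none) : chg x l = 0 := by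
  unfold chg; rw [h]

lemma chg_cons_zero (x : ℝ) (l : List ℝ) : chg x ((0:ℝ) :: l) = chg x l := by
  unfold chg; rw [fn_cons_zero]

theorem mainlem : ∀ (n : ℕ) (a : List ℝ), a.length ≤ n → ∀ x : ℝ,
    V (List.scanl (·+·) x a) ≤ V (x :: a) ∧
    (x + a.sum = 0 → (∃ w ∈ x :: a, w ≠ 0) →
      V (List.scanl (·+·) x a) + 1 ≤ V (x :: a)) := by
  intro n
  induction n with
  | zero =>
      intro a ha x
      have : a = [] := List.length_eq_zero_iff.mp (Nat.le_zero.mp ha)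
      subst this
      refine ⟨by simp [List.scanl_nil], ?_⟩
      intro hsum hw
      simp at hsum
      obtain ⟨w, hw1, hw2⟩ := hw
      simp at hw1
      subst hw1; exact absurd hsum hw2
  | succ n ih =>
      intro a ha x
      cases a with
      | nil =>
          refine ⟨by simp [List.scanl_nil], ?_⟩
          intro hsum hw
          simp at hsum
          obtain ⟨w, hw1, hw2⟩ := hw
          simp at hw1
          subst hw1; exact absurd hsum hw2
      | cons y t =>
          have hlt : t.length ≤ n := by simpa using ha
          rw [List.scanl_cons]
          by_cases hx : x = 0
          · subst hx
            have h0y : (0:ℝ) + y = y := by ring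
            rw [h0y, V_cons_zero, V_cons_zero]
            obtain ⟨ihn, ihs⟩ := ih t hlt y
            refine ⟨ihn, ?_⟩
            intro hsum hw
            apply ihs
            · simpa using hsum
            · obtain ⟨w, hw1, hw2⟩ := hw
              rcases List.mem_cons.mp hw1 with h1 | h1
              · subst h1; exact absurd rfl hw2
              · exact ⟨w, h1, hw2⟩
          · have hxne : x ≠ 0 := hx
            by_cases hx' : x + y = 0
            · -- case (i): x + y = 0
              have hy : y = -x := by linarith
              have hyne : y ≠ 0 := by rw [hy]; simpa using hxne
              have hxy : x * y < 0 := by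
                rw [hy]
                rcases lt_or_gt_of_ne hxne with h | h <;> nlinarith
              have hchg1 : chg x (y :: t) = 1 := by
                rw [chg_eq_of_fn x (fn_cons_ne y hyne t), if_pos hxy]
              have hRHS : V (x :: y :: t) = 1 + (chg y t + V t) := by
                rw [V_cons x hxne, V_cons y hyne, hchg1]
              rw [hx']
              cases t with
              | nil =>
                  have hall0 : ∀ w ∈ List.scanl (·+·) (0:ℝ) [], w = (0:ℝ) := by
                    intro w hw; simpa [List.scanl_nil] using hw
                  have hS : V (List.scanl (·+·) (0:ℝ) ([]:List ℝ)) = 0 :=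
                    V_of_all_zero hall0
                  have hchg : chg x (List.scanl (·+·) (0:ℝ) ([]:List ℝ)) = 0 :=
                    chg_of_all_zero x hall0
                  rw [V_cons x hxne, hS, hchg, hRHS]
                  exact ⟨by omega, fun _ _ => by omega⟩
              | cons z t' =>
                  have hzlen : t'.length ≤ n := by
                    simp at hlt; omega
                  rw [V_cons x hxne]
                  by_cases hall : ∀ w ∈ z :: t', w = (0:ℝ)
                  · have hVS : V (List.scanl (·+·) (0:ℝ) (z :: t')) = 0 :=
                      V_of_all_zero (scanl_zero_of_all_zero _ hall)
                    have hcS : chg x (List.scanl (·+·) (0:ℝ) (z :: t')) = 0 :=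
                      chg_of_all_zero x (scanl_zero_of_all_zero _ hall)
                    rw [hVS, hcS, hRHS]
                    exact ⟨by omega, fun _ _ => by omega⟩
                  · obtain ⟨ihn, ihs⟩ := ih t' hzlen z
                    have hVS : V (List.scanl (·+·) (0:ℝ) (z :: t')) =
                        V (List.scanl (·+·) z t') := by
                      rw [List.scanl_cons]
                      simp only [List.singleton_append, zero_add]
                      exact V_cons_zero _
                    have hchg : chg x (List.scanl (·+·) (0:ℝ) (z :: t')) ≤ 1 :=
                      chg_le_one _ _
                    have hVle : V (z :: t') ≤ chg y (z :: t') + V (z :: t') := by omega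
                    rw [hRHS, hVS]
                    constructor
                    · have h1 : V (List.scanl (·+·) z t') ≤ V (z :: t') := ihn
                      omega
                    · intro hsum hw
                      have hsum' : z + t'.sum = 0 := by
                        simp only [List.sum_cons] at hsum
                        have : y = -x := hy
                        linarith
                      push_neg at hall
                      have h2 := ihs hsum' hall
                      omega
            · -- case (ii): x + y ≠ 0
              have hfnS : fn (List.scanl (·+·) (x + y) t) = some (x + y) :=
                fn_scanl (x + y) hx' t
              have hchgS : chg x (List.scanl (·+·) (x + y) t) =
                  if x * (x + y) < 0 then 1 else 0 := chg_eq_of_fn x hfnS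
              rw [V_cons x hxne, hchgS]
              obtain ⟨ihn, ihs⟩ := ih t hlt (x + y)
              have hVx't : V ((x + y) :: t) = chg (x + y) t + V t := V_cons (x + y) hx' t
              rw [hVx't] at ihn ihs
              by_cases hy : y = 0
              · have hxx : x + y = x := by rw [hy]; ring
                have hnotlt : ¬ (x * (x + y) < 0) := by rw [hxx]; nlinarith
                rw [if_neg hnotlt]
                have hRHS : V (x :: y :: t) = chg x t + V t := by
                  rw [V_cons x hxne, hy, chg_cons_zero, V_cons_zero]
                rw [hRHS]
                rw [hxx] at ihn ihs ⊢
                constructor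
                · omega
                · intro hsum hw
                  have hsum' : x + t.sum = 0 := by
                    simp only [List.sum_cons, hy] at hsum; linarith
                  have h2 := ihs hsum' ⟨x, by simp, hxne⟩
                  omega
              · have hchgx : chg x (y :: t) = if x * y < 0 then 1 else 0 :=
                  chg_eq_of_fn x (fn_cons_ne y hy t)
                have hRHS : V (x :: y :: t) =
                    (if x * y < 0 then 1 else 0) + (chg y t + V t) := by
                  rw [V_cons x hxne, V_cons y hy, hchgx]
                rw [hRHS]
                have hstar : (if x * (x + y) < 0 then 1 else 0) + chg (x + y) t ≤
                    (if x * y < 0 then (1:ℕ) else 0) + chg y t := by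
                  cases hfn : fn t with
                  | none =>
                      rw [chg_eq_of_fn_none _ hfn, chg_eq_of_fn_none _ hfn]
                      simpa using star0 x y hxne hy
                  | some z =>
                      have hz : z ≠ 0 := fn_some_ne hfn
                      rw [chg_eq_of_fn _ hfn, chg_eq_of_fn _ hfn]
                      exact star x y z hxne hy hz hx'
                constructor
                · have h1 : (if x * (x + y) < 0 then 1 else 0) ≤ 1 := by split_ifs <;> omega
                  omega
                · intro hsum hw
                  have hsum' : (x + y) + t.sum = 0 := by
                    simp only [List.sum_cons] at hsum; linarith
                  have h2 := ihs hsum' ⟨x + y, by simp, hx'⟩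
                  omega

lemma list_sum_map_range (f : ℕ → ℝ) (m : ℕ) :
    ((List.range m).map f).sum = ∑ i ∈ Finset.range m, f i := by
  induction m with
  | zero => simp
  | succ m ih => rw [List.range_succ, Finset.sum_range_succ, List.map_append,
      List.sum_append, ih]; simp

lemma scanl_eq (s f : ℕ → ℝ) (h : ∀ i, s (i+1) = s i + f (i+1)) :
    ∀ (m j : ℕ), List.scanl (·+·) (s j) ((List.range m).map (fun i => f (j+i+1))) =
      (List.range (m+1)).map (fun i => s (j+i)) := by
  intro m
  induction m with
  | zero => intro j; simp [List.range_succ]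
  | succ m ih =>
      intro j
      rw [List.range_succ_eq_map, List.map_cons, List.scanl_cons]
      have h1 : s j + f (j + 0 + 1) = s (j+1) := by
        rw [show j + 0 + 1 = j + 1 by ring, h j]
      rw [List.map_map]
      have h2 : ((fun i => f (j+i+1)) ∘ (fun i => i+1)) = (fun i => f ((j+1)+i+1)) := by
        funext i; simp only [Function.comp]; congr 1; ring
      rw [h1, h2, ih (j+1)]
      rw [List.range_succ_eq_map (n := m+1), List.map_cons, List.map_map]
      congr 1
      apply List.map_congr_left
      intro i _
      simp only [Function.comp_apply]
      congr 1
      omega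

lemma step (q : Polynomial ℝ) (hq : q ≠ 0) :
    V ((List.range (q.natDegree + 1)).map q.coeff) + 1 ≤
      V ((List.range (((1 - Polynomial.X) * q).natDegree + 1)).map
        ((1 - Polynomial.X) * q).coeff) := by
  set p : Polynomial ℝ := (1 - Polynomial.X) * q with hp
  set n := q.natDegree with hn
  have h2X : (1 - Polynomial.X : Polynomial ℝ) = -(Polynomial.X - Polynomial.C (1:ℝ)) := by
    rw [Polynomial.C_1]; ring
  have h1X : (1 - Polynomial.X : Polynomial ℝ) ≠ 0 := by
    intro hc
    have h3 := Polynomial.natDegree_X_sub_C (1 : ℝ)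
    have h4 : (Polynomial.X - Polynomial.C (1:ℝ)) = -(1 - Polynomial.X) := by
      rw [Polynomial.C_1]; ring
    rw [h4, hc] at h3
    simp at h3
  have hdeg1X : (1 - Polynomial.X : Polynomial ℝ).natDegree = 1 := by
    rw [h2X, Polynomial.natDegree_neg, Polynomial.natDegree_X_sub_C]
  have hpne : p ≠ 0 := mul_ne_zero h1X hq
  have hdeg : p.natDegree = n + 1 := by
    rw [hp, Polynomial.natDegree_mul h1X hq, hdeg1X, hn]; ring
  have hsub : p = q - Polynomial.X * q := by rw [hp]; ring
  have hcoeff : ∀ k, q.coeff (k+1) = q.coeff k + p.coeff (k+1) := by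
    intro k
    rw [hsub, Polynomial.coeff_sub, Polynomial.coeff_X_mul]
    ring
  have h00 : q.coeff 0 = p.coeff 0 := by
    rw [hsub, Polynomial.coeff_sub]
    simp
  have hbridge := scanl_eq q.coeff p.coeff hcoeff (n+1) 0
  simp only [Nat.zero_add, zero_add] at hbridge
  have hlistp : (List.range ((n+1) + 1)).map p.coeff =
      p.coeff 0 :: (List.range (n+1)).map (fun i => p.coeff (i+1)) := by
    rw [List.range_succ_eq_map, List.map_cons, List.map_map]
    rfl
  have hlistq : (List.range ((n+1) + 1)).map q.coeff =
      ((List.range (n+1)).map q.coeff) ++ [(0:ℝ)] := by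
    rw [List.range_succ, List.map_append]
    congr 1
    simp only [List.map_cons, List.map_nil]
    congr 1
    exact Polynomial.coeff_eq_zero_of_natDegree_lt (by omega)
  have hsum : p.coeff 0 + ((List.range (n+1)).map (fun i => p.coeff (i+1))).sum = 0 := by
    have hs : ((List.range ((n+1)+1)).map p.coeff).sum = 0 := by
      rw [list_sum_map_range]
      have he : p.eval 1 = 0 := by
        rw [hp]
        simp [Polynomial.eval_mul]
      rw [Polynomial.eval_eq_sum_range, hdeg] at he
      simpa using he
    rw [hlistp, List.sum_cons] at hs
    exact hs
  have hwit : ∃ w ∈ p.coeff 0 :: (List.range (n+1)).map (fun i => p.coeff (i+1)), w ≠ 0 := by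
    refine ⟨p.coeff (n+1), ?_, ?_⟩
    · exact List.mem_cons_of_mem _ (List.mem_map.mpr ⟨n, List.mem_range.mpr (by omega), rfl⟩)
    · rw [← hdeg]
      exact Polynomial.leadingCoeff_ne_zero.mpr hpne
  obtain ⟨-, hstrict⟩ := mainlem ((List.range (n+1)).map (fun i => p.coeff (i+1))).length
    ((List.range (n+1)).map (fun i => p.coeff (i+1))) le_rfl (p.coeff 0)
  have hfin := hstrict hsum hwit
  rw [← h00, hbridge] at hfin
  have hq2 : V ((List.range ((n+1)+1)).map q.coeff) = V ((List.range (n+1)).map q.coeff) := by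
    rw [hlistq, V_append_zero]
  rw [show n + 1 + 1 = n + 2 from rfl] at hq2
  rw [hq2] at hfin
  rw [hdeg, hlistp, ← h00]
  exact hfin

lemma one_le_V {a b : ℝ} (l : List ℝ) (h : a * b < 0) : 1 ≤ V (a :: b :: l) := by
  have ha : a ≠ 0 := by rintro rfl; simp at h
  have hb : b ≠ 0 := by rintro rfl; simp at h
  rw [V, nzf_cons_ne a ha, nzf_cons_ne b hb, cnt_cons_cons, if_pos h]
  omega

lemma iterate_lem (d : ℕ) (q : Polynomial ℝ) (hq : q ≠ 0) :
    V ((List.range (q.natDegree + 1)).map q.coeff) + d ≤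
      V ((List.range ((((1 - Polynomial.X)^d) * q).natDegree + 1)).map
        (((1 - Polynomial.X)^d) * q).coeff) := by
  induction d with
  | zero => rw [pow_zero, one_mul]; omega
  | succ d ih =>
      have hkey : ((1 - Polynomial.X)^(d+1)) * q =
          (1 - Polynomial.X) * (((1 - Polynomial.X)^d) * q) := by ring
      have hne : ((1 - Polynomial.X)^d) * q ≠ 0 := by
        apply mul_ne_zero _ hq
        apply pow_ne_zero
        intro hc
        have h3 := Polynomial.natDegree_X_sub_C (1 : ℝ)
        have h4 : (Polynomial.X - Polynomial.C (1:ℝ)) = -(1 - Polynomial.X) := by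
          rw [Polynomial.C_1]; ring
        rw [h4, hc] at h3
        simp at h3
      have hstep := step (((1 - Polynomial.X)^d) * q) hne
      rw [hkey]
      omega


/-- If `p(t) = 1 - β t + ⋯` has exactly `d` sign changes in its coefficient sequence and
`(1 - t)^d` divides `p(t)`, then `β ≤ d`. -/
theorem generators_le_signChanges (p : Polynomial ℝ) (β : ℝ) (d : ℕ)
    (h0 : p.coeff 0 = 1) (h1 : p.coeff 1 = -β)
    (hsc : signChanges p = d)
    (hdvd : (1 - Polynomial.X) ^ d ∣ p) :
    β ≤ d := by
  have hpne : p ≠ 0 := by intro hc; rw [hc] at h0; simp at h0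
  obtain ⟨q, hq⟩ := hdvd
  have hqne : q ≠ 0 := by intro hc; rw [hc, mul_zero] at hq; exact hpne hq
  have hVp : V ((List.range (p.natDegree + 1)).map p.coeff) = d := hsc
  have hiter := iterate_lem d q hqne
  rw [← hq, hVp] at hiter
  have hVq : V ((List.range (q.natDegree + 1)).map q.coeff) = 0 := by omega
  -- q.coeff 0 = 1
  have hq0 : q.coeff 0 = 1 := by
    have he : p.eval 0 = 1 := by rw [← Polynomial.coeff_zero_eq_eval_zero, h0]
    rw [hq, Polynomial.eval_mul, Polynomial.eval_pow] at he
    simp at he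
    rw [← Polynomial.coeff_zero_eq_eval_zero] at he
    exact he
  -- q.coeff 1 = d - β
  have hq1 : q.coeff 1 = d - β := by
    have hd : p.derivative = Polynomial.derivative ((1 - Polynomial.X)^d) * q +
        (1 - Polynomial.X)^d * q.derivative := by
      rw [hq, Polynomial.derivative_mul]
    have hdp : Polynomial.derivative ((1 - Polynomial.X : Polynomial ℝ)^d) =
        (d : Polynomial ℝ) * (1 - Polynomial.X)^(d-1) * (-1) := by
      rw [Polynomial.derivative_pow]
      congr 1
      simp
    have hc1 : p.derivative.coeff 0 = -β := by
      rw [Polynomial.coeff_derivative, h1]; ring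
    have he := congrArg (Polynomial.eval 0) hd
    rw [← Polynomial.coeff_zero_eq_eval_zero, hc1, hdp] at he
    simp only [Polynomial.eval_add, Polynomial.eval_mul, Polynomial.eval_pow,
      Polynomial.eval_sub, Polynomial.eval_one, Polynomial.eval_X, Polynomial.eval_neg,
      Polynomial.eval_natCast] at he
    rw [← Polynomial.coeff_zero_eq_eval_zero (Polynomial.derivative q)] at he
    rw [Polynomial.coeff_derivative] at he
    rw [← Polynomial.coeff_zero_eq_eval_zero q, hq0] at he
    simp at he
    linarith
  -- q.coeff 1 ≥ 0
  have hnonneg : 0 ≤ q.coeff 1 := by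
    by_contra hneg
    push_neg at hneg
    have hdeg1 : 1 ≤ q.natDegree := by
      by_contra hdc
      push_neg at hdc
      have : q.coeff 1 = 0 :=
        Polynomial.coeff_eq_zero_of_natDegree_lt (by omega)
      rw [this] at hneg
      exact absurd hneg (by norm_num)
    obtain ⟨m, hm⟩ : ∃ m, q.natDegree = m + 1 := ⟨q.natDegree - 1, by omega⟩
    have hlist : (List.range (q.natDegree + 1)).map q.coeff =
        q.coeff 0 :: q.coeff 1 :: ((List.range m).map (fun i => q.coeff (i + 1 + 1))) := by
      rw [hm, List.range_succ_eq_map, List.map_cons, List.map_map,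
        List.range_succ_eq_map, List.map_cons, List.map_map]
      rfl
    have hprod : q.coeff 0 * q.coeff 1 < 0 := by rw [hq0]; linarith
    have := one_le_V ((List.range m).map (fun i => q.coeff (i + 1 + 1))) hprod
    rw [← hlist] at this
    omega
  rw [hq1] at hnonneg
  linarith
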